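/- Under the same setting (L = K + R - R*, K self-adjoint, ∂_t f_t = L f_t, F(t) = ‖f_t‖²), the third derivative satisfies F'''(t) = ⟨(2K)³ f_t, f_t⟩ + 12⟨[K², R] f_t, f_t⟩ + 4⟨[[K,R], R - R*] f_t, f_t⟩. -/

import Mathlib

open scoped RealInnerProductSpace
open ContinuousLinearMap

theorem stmt6 {H : Type*} [NormedAddCommGroup H] [InnerProductSpace ℝ H]
    [CompleteSpace H]
    (K R : H →L[ℝ] H) (hK : ContinuousLinearMap.adjoint K = K)
    (f : ℝ → H)
    (hf : ∀ t, HasDerivAt f ((K + R - ContinuousLinearMap.adjoint R) (f t)) t)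
    (F : ℝ → ℝ) (hF : F = fun t => ‖f t‖ ^ 2) :
    ∀ t : ℝ,
      iteratedDeriv 3 F t
        = (inner ℝ ((((2 : ℝ) • K) ^ 3) (f t)) (f t) : ℝ)
          + 12 * (inner ℝ ((K * K * R - R * (K * K)) (f t)) (f t) : ℝ)
          + 4 * (inner ℝ (((K * R - R * K) * (R - ContinuousLinearMap.adjoint R)
              - (R - ContinuousLinearMap.adjoint R) * (K * R - R * K)) (f t)) (f t) : ℝ) := by
  intro t
  set Rs := ContinuousLinearMap.adjoint R with hRs
  set L : H →L[ℝ] H := K + R - Rs with hL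
  set L' : H →L[ℝ] H := K + Rs - R with hL'
  have hLadj : ContinuousLinearMap.adjoint L = L' := by
    rw [hL, hL', hRs]
    simp [map_sub, map_add, hK, ContinuousLinearMap.adjoint_adjoint]
  -- key derivative lemma
  have key : ∀ (A : H →L[ℝ] H) (s : ℝ),
      HasDerivAt (fun u => ⟪A (f u), f u⟫) (⟪(A * L + L' * A) (f s), f s⟫) s := by
    intro A s
    have hfs : HasDerivAt f (L (f s)) s := hf s
    have hAf : HasDerivAt (fun u => A (f u)) (A (L (f s))) s :=
      (A.hasFDerivAt.comp_hasDerivAt s hfs)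
    have h := hAf.inner ℝ hfs
    convert h using 1
    · rfl
    · rfl
    rw [ContinuousLinearMap.add_apply, ContinuousLinearMap.mul_apply,
      ContinuousLinearMap.mul_apply, inner_add_left, add_comm]
    congr 1
    rw [← hLadj, ContinuousLinearMap.adjoint_inner_left]
  have keyd : ∀ (A : H →L[ℝ] H),
      deriv (fun u => ⟪A (f u), f u⟫) = fun s => ⟪(A * L + L' * A) (f s), f s⟫ :=
    fun A => funext fun s => (key A s).deriv
  set B1 : H →L[ℝ] H := 1 * L + L' * 1 with hB1
  set B2 : H →L[ℝ] H := B1 * L + L' * B1 with hB2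
  set B3 : H →L[ℝ] H := B2 * L + L' * B2 with hB3
  have hF0 : F = fun s => ⟪(1 : H →L[ℝ] H) (f s), f s⟫ := by
    funext s
    rw [hF]
    simp [ContinuousLinearMap.one_apply, real_inner_self_eq_norm_sq]
  have h1 : deriv F = fun s => ⟪B1 (f s), f s⟫ := by rw [hF0, keyd 1]
  have h2 : deriv (deriv F) = fun s => ⟪B2 (f s), f s⟫ := by rw [h1, keyd B1]
  have h3 : deriv (deriv (deriv F)) = fun s => ⟪B3 (f s), f s⟫ := by rw [h2, keyd B2]
  have hiter : iteratedDeriv 3 F t = ⟪B3 (f t), f t⟫ := by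
    rw [show (3:ℕ) = 2 + 1 from rfl, iteratedDeriv_succ,
      show (2:ℕ) = 1 + 1 from rfl, iteratedDeriv_succ, iteratedDeriv_one, h3]
  rw [hiter]
  -- algebra
  set C : H →L[ℝ] H := K * K * R - R * (K * K) with hC
  set C' : H →L[ℝ] H := K * K * Rs - Rs * (K * K) with hC'
  set S : H →L[ℝ] H := R - Rs with hS
  set D : H →L[ℝ] H := (K * R - R * K) * S - S * (K * R - R * K) with hD
  set D' : H →L[ℝ] H := (K * Rs - Rs * K) * S - S * (K * Rs - Rs * K) with hD'
  have symm : ∀ (A : H →L[ℝ] H) (x : H), ⟪A x, x⟫ = ⟪(ContinuousLinearMap.adjoint A) x, x⟫ := by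
    intro A x
    rw [ContinuousLinearMap.adjoint_inner_left, real_inner_comm]
  have hCadj : ContinuousLinearMap.adjoint C' = -C := by
    rw [← ContinuousLinearMap.star_eq_adjoint, hC', hC, hRs]
    simp only [star_sub, star_mul, ContinuousLinearMap.star_eq_adjoint, hK,
      ContinuousLinearMap.adjoint_adjoint]
    noncomm_ring
  have hDadj : ContinuousLinearMap.adjoint D' = -D := by
    rw [← ContinuousLinearMap.star_eq_adjoint, hD', hD, hS, hRs]
    simp only [star_sub, star_mul, ContinuousLinearMap.star_eq_adjoint, hK,
      ContinuousLinearMap.adjoint_adjoint]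
    noncomm_ring
  have hCx : ∀ x, ⟪C' x, x⟫ = -⟪C x, x⟫ := by
    intro x
    rw [symm C' x, hCadj, ContinuousLinearMap.neg_apply, inner_neg_left]
  have hDx : ∀ x, ⟪D' x, x⟫ = -⟪D x, x⟫ := by
    intro x
    rw [symm D' x, hDadj, ContinuousLinearMap.neg_apply, inner_neg_left]
  have hopid : B3 = ((2 : ℝ) • K) ^ 3
      + ((C - C') + (C - C') + (C - C') + (C - C') + (C - C') + (C - C'))
      + ((D - D') + (D - D')) := by
    rw [hB3, hB2, hB1, hC, hC', hD, hD', hS, hL, hL', two_smul]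
    noncomm_ring
  rw [hopid]
  simp only [ContinuousLinearMap.add_apply, ContinuousLinearMap.sub_apply,
    inner_add_left, inner_sub_left]
  rw [hCx, hDx]
  ring
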